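/- Let 𝒜 be a Grothendieck category with a fixed generator X. Given a cardinal κ there exists a cardinal λ such that for every object Y with |Y| ≤ κ and every subobject Z ⊆ Y, the quotient satisfies |Y/Z| ≤ λ. -/

import Mathlib

open CategoryTheory Limits

universe v u

/-- In a Grothendieck category with generator `X`, given a cardinal `κ` there is a
cardinal `λ` such that whenever `|Y| ≤ κ` and `Z ⊆ Y`, the quotient `Y/Z` satisfies
`|Y/Z| ≤ λ`. -/
theorem statement2 {C : Type u} [Category.{v} C] [Abelian C] [HasColimits C] [AB5 C]
    (X : C) (hX : IsSeparator X) (κ : Cardinal.{v}) :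
    ∃ lam : Cardinal.{v}, ∀ Y : C, Cardinal.mk (X ⟶ Y) ≤ κ →
      ∀ Z : Subobject Y, Cardinal.mk (X ⟶ cokernel Z.arrow) ≤ lam := by
  haveI : WellPowered.{v} C := wellPowered_of_isSeparator X hX
  set A : C := ∐ (fun _ : Option κ.out => X) with hA
  haveI : Small.{v} (Subobject A) := WellPowered.subobject_small.{v} A
  refine ⟨⨆ s : Shrink.{v} (Subobject A),
      Cardinal.mk (X ⟶ cokernel (((equivShrink (Subobject A)).symm s).arrow)), ?_⟩
  intro Y hY Z
  -- a surjection `Option κ.out → (X ⟶ Y)`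
  have hne : Nonempty (X ⟶ Y) := ⟨0⟩
  have hle : Cardinal.mk (X ⟶ Y) ≤ Cardinal.mk (Option κ.out) := by
    refine hY.trans ?_
    rw [Cardinal.mk_option, Cardinal.mk_out]
    exact le_self_add
  obtain ⟨emb⟩ := Cardinal.le_def _ _ |>.mp hle
  set g : Option κ.out → (X ⟶ Y) := Function.invFun emb with hg
  have hgsurj : Function.Surjective g := Function.invFun_surjective emb.injective
  -- the canonical epi `A ⟶ Y`
  set e : A ⟶ Y := Sigma.desc g with he
  haveI hepi : Epi e := by
    constructor
    intro W u v huv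
    refine (isSeparator_def X).mp hX _ _ (fun k => ?_)
    obtain ⟨t, rfl⟩ := hgsurj k
    have : Sigma.ι (fun _ : Option κ.out => X) t ≫ e = g t := by simp [he]
    rw [← this, Category.assoc, Category.assoc, huv]
  -- the epi `p : A ⟶ cokernel Z.arrow`
  set p : A ⟶ cokernel Z.arrow := e ≫ cokernel.π Z.arrow with hp
  haveI : Epi p := epi_comp _ _
  -- `cokernel Z.arrow` is isomorphic to `cokernel s.arrow` for `s := Subobject.mk (kernel.ι p)`
  have hepiι : Epi (Abelian.image.ι p) := by
    have hfac := Abelian.coimage_image_factorisation p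
    rw [← Category.assoc] at hfac
    exact epi_of_epi_fac hfac
  haveI : IsIso (Abelian.image.ι p) := isIso_of_mono_of_epi _
  have i2 : (cokernel (kernel.ι p) : C) ≅ cokernel Z.arrow :=
    asIso (Abelian.coimageImageComparison p) ≪≫ asIso (Abelian.image.ι p)
  have i1 : (cokernel ((Subobject.mk (kernel.ι p)).arrow) : C) ≅ cokernel (kernel.ι p) := by
    rw [← Subobject.underlyingIso_hom_comp_eq_mk]
    exact cokernelEpiComp _ _
  have key : Cardinal.mk (X ⟶ cokernel Z.arrow) =
      Cardinal.mk (X ⟶ cokernel ((Subobject.mk (kernel.ι p)).arrow)) :=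
    Cardinal.mk_congr (Iso.homCongr (Iso.refl X) (i1 ≪≫ i2)).symm
  rw [key]
  have := le_ciSup (f := fun s : Shrink.{v} (Subobject A) =>
      Cardinal.mk (X ⟶ cokernel (((equivShrink (Subobject A)).symm s).arrow)))
      (Cardinal.bddAbove_range _) (equivShrink (Subobject A) (Subobject.mk (kernel.ι p)))
  rwa [Equiv.symm_apply_apply] at this
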